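/- In a recollement (A, B, C) of abelian categories, for every object B₀ of B there is an exact sequence 0 → K → l(e(B₀)) → B₀ → i(q(B₀)) → 0, where the middle map is the counit of the adjunction l ⊣ e, the right map is the unit of q ⊣ i, and the kernel K lies in the essential image of i. -/

import Mathlib

open CategoryTheory CategoryTheory.Limits

universe v₁ v₂ v₃ u₁ u₂ u₃

/-- A recollement of abelian categories `(A, B, C)`: adjoint triples `(q, i, p)` and
`(l, e, r)` with `i`, `l`, `r` fully faithful and the essential image of `i` equal to
the kernel of `e`. -/
structure AbRecollement (A : Type u₁) (B : Type u₂) (C : Type u₃)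
    [Category.{v₁} A] [Category.{v₂} B] [Category.{v₃} C]
    [Abelian A] [Abelian B] [Abelian C] where
  i : A ⥤ B
  e : B ⥤ C
  q : B ⥤ A
  p : B ⥤ A
  l : C ⥤ B
  r : C ⥤ B
  adj_qi : q ⊣ i
  adj_ip : i ⊣ p
  adj_le : l ⊣ e
  adj_er : e ⊣ r
  i_full : i.Full
  i_faithful : i.Faithful
  l_full : l.Full
  l_faithful : l.Faithful
  r_full : r.Full
  r_faithful : r.Faithful
  essImage_i_eq_ker_e : ∀ X : B, i.essImage X ↔ Limits.IsZero (e.obj X)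

/-- In a recollement `(A, B, C)` of abelian categories, for every object
`B₀` of `B` there is an exact sequence
`0 → K → l(e(B₀)) → B₀ → i(q(B₀)) → 0`,
where the middle map is the counit of `l ⊣ e`, the right map is the unit of `q ⊣ i`,
and the kernel `K` of the counit lies in the essential image of `i`. -/
theorem AbRecollement.canonical_exact_sequence
    {A : Type u₁} {B : Type u₂} {C : Type u₃}
    [Category.{v₁} A] [Category.{v₂} B] [Category.{v₃} C]
    [Abelian A] [Abelian B] [Abelian C]
    (R : AbRecollement A B C) (B₀ : B) :
    Epi (R.adj_qi.unit.app B₀) ∧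
    ∃ hzero : R.adj_le.counit.app B₀ ≫ R.adj_qi.unit.app B₀ = 0,
      (ShortComplex.mk (R.adj_le.counit.app B₀) (R.adj_qi.unit.app B₀) hzero).Exact ∧
      R.i.essImage (Limits.kernel (R.adj_le.counit.app B₀)) := by
  haveI := R.i_full
  haveI := R.i_faithful
  haveI := R.l_full
  haveI := R.l_faithful
  haveI := R.adj_qi.isRightAdjoint
  haveI := R.adj_le.isRightAdjoint
  haveI := R.adj_er.isLeftAdjoint
  haveI : PreservesLimitsOfSize.{0, 0} R.e := R.adj_le.rightAdjoint_preservesLimits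
  haveI : PreservesColimitsOfSize.{0, 0} R.e := R.adj_er.leftAdjoint_preservesColimits
  set η := R.adj_qi.unit.app B₀ with hη
  set εl := R.adj_le.counit.app B₀ with hεl
  have hIQ : IsZero (R.e.obj (R.i.obj (R.q.obj B₀))) :=
    (R.essImage_i_eq_ker_e _).mp ⟨_, ⟨Iso.refl _⟩⟩
  -- Step A : η is epi
  have hepi : Epi η := by
    have hcoker : IsZero (R.e.obj (cokernel η)) := by
      have h0 : IsZero (cokernel (R.e.map η)) :=
        IsZero.of_epi_eq_zero (cokernel.π (R.e.map η)) (hIQ.eq_of_src _ _)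
      exact h0.of_iso (PreservesCokernel.iso R.e η)
    obtain ⟨Y₀, ⟨φ⟩⟩ := (R.essImage_i_eq_ker_e _).mpr hcoker
    obtain ⟨g, hg⟩ := R.i.map_surjective (cokernel.π η ≫ φ.inv)
    have hcomp : η ≫ R.i.map g = 0 := by
      rw [hg, ← Category.assoc, cokernel.condition, zero_comp]
    have hgz : g = 0 := by
      apply (R.adj_qi.homEquiv B₀ Y₀).injective
      rw [Adjunction.homEquiv_unit, Adjunction.homEquiv_unit, Functor.map_zero, comp_zero]
      exact hcomp
    have hπ : cokernel.π η = 0 := by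
      have : cokernel.π η = (cokernel.π η ≫ φ.inv) ≫ φ.hom := by simp
      rw [this, ← hg, hgz, Functor.map_zero, zero_comp]
    exact Abelian.epi_of_cokernel_π_eq_zero _ hπ
  haveI := hepi
  refine ⟨hepi, ?_, ?_, ?_⟩
  · -- Step B : zero composite
    apply (R.adj_le.homEquiv (R.e.obj B₀) _).injective
    exact hIQ.eq_of_tgt _ _
  · -- Step C : exactness at B₀
    haveI hIso : IsIso (R.e.map εl) := inferInstance
    have hfac : ∀ {T : B} (f : B₀ ⟶ T), εl ≫ f = 0 → ∃ m : R.i.obj (R.q.obj B₀) ⟶ T, η ≫ m = f := by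
      intro T f hf
      have hef : R.e.map f = 0 := by
        have h1 : R.e.map εl ≫ R.e.map f = 0 := by
          rw [← Functor.map_comp, hf, Functor.map_zero]
        rw [← cancel_epi (R.e.map εl), h1, comp_zero]
      haveI : Epi (R.e.map (Abelian.factorThruImage f)) := R.e.map_epi _
      haveI : Mono (R.e.map (Abelian.image.ι f)) := R.e.map_mono _
      have himg : IsZero (R.e.obj (Abelian.image f)) := by
        apply IsZero.of_mono_eq_zero (R.e.map (Abelian.image.ι f))
        have h2 : R.e.map (Abelian.factorThruImage f) ≫ R.e.map (Abelian.image.ι f) = 0 := by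
          rw [← Functor.map_comp, Abelian.image.fac, hef]
        exact zero_of_epi_comp _ h2
      have himgE := (R.essImage_i_eq_ker_e _).mpr himg
      obtain ⟨Y₁, ⟨ψ⟩⟩ := himgE
      set g' : B₀ ⟶ R.i.obj Y₁ := Abelian.factorThruImage f ≫ ψ.inv with hg'
      set h := (R.adj_qi.homEquiv B₀ Y₁).symm g' with hh
      have hadj : η ≫ R.i.map h = g' := by
        have := (R.adj_qi.homEquiv B₀ Y₁).apply_symm_apply g'
        rwa [Adjunction.homEquiv_unit] at this
      refine ⟨R.i.map h ≫ ψ.hom ≫ Abelian.image.ι f, ?_⟩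
      rw [← Category.assoc, hadj, hg']
      simp [Abelian.image.fac]
    have hcolim : IsColimit (CokernelCofork.ofπ η
        (show εl ≫ η = 0 from (R.adj_le.homEquiv (R.e.obj B₀) _).injective (hIQ.eq_of_tgt _ _))) :=
      CokernelCofork.IsColimit.ofπ' η _ (fun k hk => ⟨(hfac k hk).choose, (hfac k hk).choose_spec⟩)
    exact ShortComplex.exact_of_g_is_cokernel _ hcolim
  · -- Step D : kernel of εl lies in the essential image of i
    haveI hIso : IsIso (R.e.map εl) := inferInstance
    have hker : IsZero (R.e.obj (kernel εl)) := by
      have h0 : IsZero (kernel (R.e.map εl)) :=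
        IsZero.of_iso (isZero_zero _) (kernel.ofMono (R.e.map εl))
      exact h0.of_iso (PreservesKernel.iso R.e εl)
    exact (R.essImage_i_eq_ker_e _).mpr hker
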